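/- Fix 0 < ε₂ < ε₁ and T > 0. If X^{ε₁} and X^{ε₂} are continuous solutions on [0,T] of the ε₁- and ε₂-approximating equations respectively (with the same driver g), then X^{ε₂}_t > X^{ε₁}_t for all t ∈ (0,T]. -/

import Mathlib

open MeasureTheory Filter Set
open Topology

/-- `X` is a continuous solution on `[0,T]` of the ε-approximating equation
`X_t = X₀ + a ∫₀ᵗ (s+ε)^{2H-1} / (X_s 1_{X_s>0} + ε) ds − b ∫₀ᵗ X_s ds + σ g(t)`. -/
def approxSol (X₀ a b σ H : ℝ) (g : ℝ → ℝ) (T ε : ℝ) (X : ℝ → ℝ) : Prop :=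
  ContinuousOn X (Set.Icc 0 T) ∧
    ∀ t ∈ Set.Icc (0:ℝ) T,
      X t = X₀ + a * (∫ s in (0:ℝ)..t,
            (s + ε) ^ (2 * H - 1) / ((if 0 < X s then X s else 0) + ε))
          - b * (∫ s in (0:ℝ)..t, X s) + σ * g t

lemma comparison_aux_mine (T : ℝ) (hT : 0 < T) (G W : ℝ → ℝ)
    (hGc : ContinuousOn G (Icc 0 T)) (hWc : ContinuousOn W (Icc 0 T))
    (hkey : ∀ t ∈ Icc (0:ℝ) T, G t = ∫ s in (0:ℝ)..t, W s)
    (hpos : ∀ t ∈ Icc (0:ℝ) T, G t = 0 → 0 < W t) :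
    ∀ t ∈ Ioc (0:ℝ) T, 0 < G t := by
  have hsub : ∀ u v : ℝ, 0 ≤ u → u ≤ v → v ≤ T → IntervalIntegrable W volume u v := by
    intro u v hu huv hvT
    apply (hWc.mono ?_).intervalIntegrable
    rw [uIcc_of_le huv]
    exact Icc_subset_Icc hu hvT
  by_contra hcon
  push_neg at hcon
  obtain ⟨t₀, ht₀, hle⟩ := hcon
  set B := {t : ℝ | t ∈ Ioc (0:ℝ) T ∧ G t ≤ 0} with hB
  have hBne : B.Nonempty := ⟨t₀, ht₀, hle⟩
  have hBbd : BddBelow B := ⟨0, fun t ht => ht.1.1.le⟩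
  set τ := sInf B with hτdef
  have hG0 : G 0 = 0 := by simpa using hkey 0 ⟨le_rfl, hT.le⟩
  have hτmem : (τ ∈ Icc (0:ℝ) T ∧ G τ ≤ 0) := by
    have hclosed : IsClosed (Icc (0:ℝ) T ∩ G ⁻¹' Iic 0) :=
      hGc.preimage_isClosed_of_isClosed isClosed_Icc isClosed_Iic
    have hsubset : B ⊆ Icc (0:ℝ) T ∩ G ⁻¹' Iic 0 := by
      intro t ht
      exact ⟨⟨ht.1.1.le, ht.1.2⟩, ht.2⟩
    have h1 : τ ∈ closure (Icc (0:ℝ) T ∩ G ⁻¹' Iic 0) :=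
      closure_mono hsubset (csInf_mem_closure hBne hBbd)
    rw [hclosed.closure_eq] at h1
    exact ⟨h1.1, h1.2⟩
  obtain ⟨⟨hτ0, hτT⟩, hGτle⟩ := hτmem
  have hlow : ∀ s, 0 ≤ s → s < τ → 0 ≤ G s := by
    intro s hs0 hsτ
    rcases eq_or_lt_of_le hs0 with h | h
    · rw [← h, hG0]
    · by_contra hneg
      push_neg at hneg
      have hsB : s ∈ B := ⟨⟨h, hsτ.le.trans hτT⟩, hneg.le⟩
      exact absurd (csInf_le hBbd hsB) (not_le.2 hsτ)
  have hGτ : G τ = 0 := by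
    rcases eq_or_lt_of_le hτ0 with h | h
    · rw [← h, hG0]
    · refine le_antisymm hGτle ?_
      have hne : (𝓝[Ico (0:ℝ) τ] τ).NeBot := by
        refine mem_closure_iff_nhdsWithin_neBot.mp ?_
        rw [closure_Ico (show (0:ℝ) ≠ τ from h.ne)]
        exact ⟨hτ0, le_rfl⟩
      have htend : Tendsto G (𝓝[Ico (0:ℝ) τ] τ) (𝓝 (G τ)) :=
        (hGc.continuousWithinAt ⟨hτ0, hτT⟩).mono (fun x hx => ⟨hx.1, hx.2.le.trans hτT⟩)
      exact ge_of_tendsto htend (eventually_nhdsWithin_of_forall fun s hs => hlow s hs.1 hs.2)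
  have hWτ : 0 < W τ := hpos τ ⟨hτ0, hτT⟩ hGτ
  have hWev : ∀ᶠ s in 𝓝[Icc (0:ℝ) T] τ, 0 < W s :=
    (hWc.continuousWithinAt ⟨hτ0, hτT⟩).eventually (eventually_gt_nhds hWτ)
  obtain ⟨δ, hδ, hball⟩ : ∃ δ > 0, ∀ s ∈ Icc (0:ℝ) T, |s - τ| < δ → 0 < W s := by
    rw [eventually_nhdsWithin_iff] at hWev
    rw [Metric.eventually_nhds_iff] at hWev
    obtain ⟨δ, hδ, h⟩ := hWev
    exact ⟨δ, hδ, fun s hs hd => h (by simpa [Real.dist_eq] using hd) hs⟩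
  rcases eq_or_lt_of_le hτ0 with hτz | hτpos
  · -- τ = 0
    have hlt : sInf B < min δ T := by
      rw [← hτdef, ← hτz]
      exact lt_min hδ hT
    obtain ⟨t, htB, htδ⟩ := exists_lt_of_csInf_lt hBne hlt
    have htpos : 0 < t := htB.1.1
    have htT : t ≤ T := htB.1.2
    have htδ' : t < δ := htδ.trans_le (min_le_left _ _)
    have hGt : 0 < G t := by
      rw [hkey t ⟨htpos.le, htT⟩]
      refine intervalIntegral.intervalIntegral_pos_of_pos_on (hsub 0 t le_rfl htpos.le htT) ?_ htpos
      intro x hx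
      refine hball x ⟨hx.1.le, hx.2.le.trans htT⟩ ?_
      rw [← hτz, sub_zero, abs_of_pos hx.1]
      exact hx.2.trans htδ'
    exact absurd htB.2 (not_le.2 hGt)
  · -- τ > 0
    set s₀ := max (τ - δ/2) 0 with hs₀def
    have hs₀0 : 0 ≤ s₀ := le_max_right _ _
    have hs₀τ : s₀ < τ := max_lt (by linarith) hτpos
    have hs₀lb : τ - δ/2 ≤ s₀ := le_max_left _ _
    have hWpos : ∀ x ∈ Ioo s₀ τ, 0 < W x := by
      intro x hx
      refine hball x ⟨hs₀0.trans hx.1.le, hx.2.le.trans hτT⟩ ?_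
      rw [abs_lt]
      constructor <;> [linarith [hx.1]; linarith [hx.2]]
    have hint : (0:ℝ) < ∫ x in s₀..τ, W x :=
      intervalIntegral.intervalIntegral_pos_of_pos_on (hsub s₀ τ hs₀0 hs₀τ.le hτT) hWpos hs₀τ
    have hdiff : G τ - G s₀ = ∫ x in s₀..τ, W x := by
      rw [hkey τ ⟨hτ0, hτT⟩, hkey s₀ ⟨hs₀0, hs₀τ.le.trans hτT⟩]
      exact intervalIntegral.integral_interval_sub_left (hsub 0 τ le_rfl hτ0 hτT)
        (hsub 0 s₀ le_rfl hs₀0 (hs₀τ.le.trans hτT))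
    have hGs₀ : 0 ≤ G s₀ := hlow s₀ hs₀0 hs₀τ
    rw [hGτ] at hdiff
    linarith

/-- **Comparison of approximations.** If `0 < ε₂ < ε₁` and `X¹, X²` solve the
`ε₁`- and `ε₂`-approximating equations on `[0,T]`, then `X²_t > X¹_t` on `(0,T]`. -/
theorem approx_comparison
    (X₀ a b σ H : ℝ) (hX₀ : 0 < X₀) (ha : 0 < a) (hb : 0 ≤ b) (hσ : 0 < σ)
    (hH0 : 0 < H) (hH : H < 1/2)
    (g : ℝ → ℝ) (hgc : ContinuousOn g (Set.Ici 0)) (hg0 : g 0 = 0)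
    (ε₁ ε₂ T : ℝ) (hε₂ : 0 < ε₂) (hε : ε₂ < ε₁) (hT : 0 < T)
    (X1 X2 : ℝ → ℝ)
    (h1 : approxSol X₀ a b σ H g T ε₁ X1)
    (h2 : approxSol X₀ a b σ H g T ε₂ X2) :
    ∀ t ∈ Set.Ioc (0:ℝ) T, X1 t < X2 t := by
  obtain ⟨hc1, he1⟩ := h1
  obtain ⟨hc2, he2⟩ := h2
  have hε₁ : 0 < ε₁ := hε₂.trans hε
  have h2H : 2 * H - 1 < 0 := by linarith
  have hif : ∀ x : ℝ, (if 0 < x then x else 0) = max x 0 := by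
    intro x
    rcases le_or_gt x 0 with h | h
    · simp [not_lt.2 h, max_eq_right h]
    · simp [h, max_eq_left h.le]
  set F1 : ℝ → ℝ := fun s => (s + ε₁) ^ (2 * H - 1) / ((if 0 < X1 s then X1 s else 0) + ε₁)
    with hF1def
  set F2 : ℝ → ℝ := fun s => (s + ε₂) ^ (2 * H - 1) / ((if 0 < X2 s then X2 s else 0) + ε₂)
    with hF2def
  -- continuity of F1, F2
  have hFc : ∀ (X : ℝ → ℝ) (ε : ℝ), 0 < ε → ContinuousOn X (Icc 0 T) →
      ContinuousOn (fun s => (s + ε) ^ (2 * H - 1) / ((if 0 < X s then X s else 0) + ε))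
        (Icc 0 T) := by
    intro X ε hεp hc
    have : (fun s => (s + ε) ^ (2 * H - 1) / ((if 0 < X s then X s else 0) + ε))
        = fun s => (s + ε) ^ (2 * H - 1) / (max (X s) 0 + ε) := by
      funext s; rw [hif (X s)]
    rw [this]
    apply ContinuousOn.div
    · apply ContinuousOn.rpow_const (by fun_prop)
      intro s hs
      left
      have := hs.1
      positivity
    · exact (hc.sup continuousOn_const).add continuousOn_const
    · intro s hs
      have : (0:ℝ) < max (X s) 0 + ε := by positivity
      exact this.ne'
  have hF1c : ContinuousOn F1 (Icc 0 T) := hFc X1 ε₁ hε₁ hc1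
  have hF2c : ContinuousOn F2 (Icc 0 T) := hFc X2 ε₂ hε₂ hc2
  have hDc : ContinuousOn (fun t => X2 t - X1 t) (Icc 0 T) := hc2.sub hc1
  have hsubI : ∀ t ∈ Icc (0:ℝ) T, uIcc (0:ℝ) t ⊆ Icc 0 T := by
    intro t ht
    rw [uIcc_of_le ht.1]
    exact Icc_subset_Icc le_rfl ht.2
  have hInt : ∀ (f : ℝ → ℝ), ContinuousOn f (Icc 0 T) → ∀ t ∈ Icc (0:ℝ) T,
      IntervalIntegrable f volume 0 t :=
    fun f hf t ht => (hf.mono (hsubI t ht)).intervalIntegrable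
  -- the difference equation
  have hD0 : X2 0 - X1 0 = 0 := by
    have e1 := he1 0 ⟨le_rfl, hT.le⟩
    have e2 := he2 0 ⟨le_rfl, hT.le⟩
    simp only [intervalIntegral.integral_same, hg0, mul_zero, add_zero, sub_zero] at e1 e2
    rw [e1, e2, sub_self]
  have hDeq : ∀ t ∈ Icc (0:ℝ) T, X2 t - X1 t
      = a * (∫ s in (0:ℝ)..t, F2 s) - a * (∫ s in (0:ℝ)..t, F1 s)
        - b * (∫ s in (0:ℝ)..t, (X2 s - X1 s)) := by
    intro t ht
    rw [intervalIntegral.integral_sub (hInt X2 hc2 t ht) (hInt X1 hc1 t ht),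
      he1 t ht, he2 t ht]
    ring
  -- G and W
  set G : ℝ → ℝ := fun t => (X2 t - X1 t) * Real.exp (b * t) with hGdef
  set W : ℝ → ℝ := fun t => a * (F2 t - F1 t) * Real.exp (b * t) with hWdef
  have hexpc : Continuous fun t : ℝ => Real.exp (b * t) := by fun_prop
  have hGc : ContinuousOn G (Icc 0 T) := hDc.mul hexpc.continuousOn
  have hWc : ContinuousOn W (Icc 0 T) :=
    (continuousOn_const.mul (hF2c.sub hF1c)).mul hexpc.continuousOn
  have hmemx : ∀ x ∈ Ioo (0:ℝ) T, Icc 0 T ∈ 𝓝 x := fun x hx =>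
    mem_nhds_iff.mpr ⟨Ioo 0 T, Ioo_subset_Icc_self, isOpen_Ioo, hx⟩
  have hDeriv : ∀ (f : ℝ → ℝ), ContinuousOn f (Icc 0 T) → ∀ x ∈ Ioo (0:ℝ) T,
      HasDerivAt (fun u => ∫ s in (0:ℝ)..u, f s) (f x) x := by
    intro f hf x hx
    exact intervalIntegral.integral_hasDerivAt_right
      (hInt f hf x (Ioo_subset_Icc_self hx))
      ⟨Icc 0 T, hmemx x hx, hf.aestronglyMeasurable measurableSet_Icc⟩
      (hf.continuousAt (hmemx x hx))
  have hGderiv : ∀ x ∈ Ioo (0:ℝ) T, HasDerivAt G (W x) x := by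
    intro x hx
    have hI2 := hDeriv F2 hF2c x hx
    have hI1 := hDeriv F1 hF1c x hx
    have hID := hDeriv (fun s => X2 s - X1 s) hDc x hx
    have hDd : HasDerivAt (fun u => a * (∫ s in (0:ℝ)..u, F2 s)
          - a * (∫ s in (0:ℝ)..u, F1 s) - b * (∫ s in (0:ℝ)..u, (X2 s - X1 s)))
        (a * F2 x - a * F1 x - b * (X2 x - X1 x)) x :=
      ((hI2.const_mul a).sub (hI1.const_mul a)).sub (hID.const_mul b)
    have hDD : HasDerivAt (fun u => X2 u - X1 u)
        (a * F2 x - a * F1 x - b * (X2 x - X1 x)) x := by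
      apply hDd.congr_of_eventuallyEq
      filter_upwards [hmemx x hx] with u hu
      exact hDeq u hu
    have hlin : HasDerivAt (fun u : ℝ => b * u) b x := by
      simpa using (hasDerivAt_id x).const_mul b
    have hexp : HasDerivAt (fun u : ℝ => Real.exp (b * u)) (Real.exp (b * x) * b) x :=
      (Real.hasDerivAt_exp (b * x)).comp x hlin
    have : HasDerivAt (fun u => (X2 u - X1 u) * Real.exp (b * u)) _ x := hDD.mul hexp
    convert this using 1
    simp only [hWdef]
    ring
  have hkey : ∀ t ∈ Icc (0:ℝ) T, G t = ∫ s in (0:ℝ)..t, W s := by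
    intro t ht
    have heq := intervalIntegral.integral_eq_sub_of_hasDerivAt_of_le ht.1
      (hGc.mono (Icc_subset_Icc le_rfl ht.2))
      (fun x hx => hGderiv x ⟨hx.1, lt_of_lt_of_le hx.2 ht.2⟩)
      (hInt W hWc t ht)
    have hG0 : G 0 = 0 := by
      simp only [hGdef, hD0, zero_mul]
    rw [heq, hG0, sub_zero]
  have hpos : ∀ t ∈ Icc (0:ℝ) T, G t = 0 → 0 < W t := by
    intro t ht hGt
    have hxeq : X2 t = X1 t := by
      have hexpne : Real.exp (b * t) ≠ 0 := (Real.exp_pos _).ne'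
      have := mul_eq_zero.mp hGt
      rcases this with h | h
      · linarith [sub_eq_zero.mp h]
      · exact absurd h hexpne
    have ht2 : (0:ℝ) < t + ε₂ := by have := ht.1; linarith
    have hrpow : (t + ε₁) ^ (2 * H - 1) < (t + ε₂) ^ (2 * H - 1) :=
      Real.rpow_lt_rpow_of_neg ht2 (by linarith) h2H
    have hrp2 : 0 < (t + ε₂) ^ (2 * H - 1) := Real.rpow_pos_of_pos ht2 _
    have hm : (0:ℝ) ≤ max (X1 t) 0 := le_max_right _ _
    have hF1lt : F1 t < F2 t := by
      simp only [hF1def, hF2def, hif, hxeq]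
      have hd2 : (0:ℝ) < max (X1 t) 0 + ε₂ := by positivity
      have hd1 : (0:ℝ) < max (X1 t) 0 + ε₁ := by positivity
      calc (t + ε₁) ^ (2 * H - 1) / (max (X1 t) 0 + ε₁)
          < (t + ε₂) ^ (2 * H - 1) / (max (X1 t) 0 + ε₁) :=
            div_lt_div_of_pos_right hrpow hd1
        _ ≤ (t + ε₂) ^ (2 * H - 1) / (max (X1 t) 0 + ε₂) := by
            apply div_le_div_of_nonneg_left hrp2.le hd2
            linarith
    simp only [hWdef]
    have : 0 < F2 t - F1 t := by linarith
    positivity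
  -- conclude
  have hfin := comparison_aux_mine T hT G W hGc hWc hkey hpos
  intro t ht
  have := hfin t ht
  simp only [hGdef] at this
  nlinarith [Real.exp_pos (b * t), this]
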